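/- Let G be an elementary abelian 2-group of order at least 2^4, and let α be an automorphism of G with λ(α) ≥ 1/2, where λ(α) is the largest cycle length of α divided by |G|. Then λ(α) > 1/2 (i.e., the value 1/2 is not attained). -/

import Mathlib

/-- The largest cycle length ("Λ-value") of a self-map of a set. -/
noncomputable def maxCycleLen {X : Type*} (f : X → X) : ℕ :=
  sSup (Set.range fun x => Function.minimalPeriod f x)

open Function

private lemma aux_pow12 (n : ℕ) (hn : 4 ≤ n) : n ≤ 2 ^ (n - 2) := by
  induction n with
  | zero => omega
  | succ m ih =>
    rcases Nat.lt_or_ge m 4 with hm | hm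
    · interval_cases m <;> simp_all
    · have h1 := ih (by omega)
      have h2 : m + 1 - 2 = (m - 2) + 1 := by omega
      rw [h2, pow_succ]
      omega

private lemma key12 (n : ℕ) (hn : 4 ≤ n) (α : AddAut (Fin n → ZMod 2)) (x : Fin n → ZMod 2) :
    Function.minimalPeriod (⇑α) x ≠ 2 ^ (n - 1) := by
  intro hm
  haveI : Nonempty (Fin n) := ⟨⟨0, by omega⟩⟩
  haveI : Nontrivial (Fin n → ZMod 2) := by infer_instance
  haveI : CharP (Module.End (ZMod 2) (Fin n → ZMod 2)) 2 :=
    charP_of_injective_algebraMap' (ZMod 2) 2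
  set A : (Fin n → ZMod 2) →ₗ[ZMod 2] (Fin n → ZMod 2) :=
    AddMonoidHom.toZModLinearMap 2 α.toAddMonoidHom with hA
  have hAapp : ∀ j (v : Fin n → ZMod 2), (A ^ j) v = (⇑α)^[j] v := by
    intro j
    induction j with
    | zero => intro v; simp
    | succ j ih =>
      intro v
      rw [pow_succ', iterate_succ_apply']
      rw [Module.End.mul_apply, ih]
      rfl
  set g : Module.End (ZMod 2) (Fin n → ZMod 2) := A + 1 with hg
  have hself : ∀ v : Fin n → ZMod 2, v + v = 0 := by
    intro v; funext i
    show v i + v i = 0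
    generalize v i = a
    revert a; decide
  have hgp : ∀ k, g ^ (2 ^ k) = A ^ (2 ^ k) + 1 := by
    intro k
    have := add_pow_char_pow_of_commute (p := 2) (n := k) (Commute.one_right A)
    simpa using this
  have hper : (⇑α)^[2 ^ (n-1)] x = x := by
    rw [← hm]; exact Function.iterate_minimalPeriod
  have h0 : (g ^ (2 ^ (n-1))) x = 0 := by
    rw [hgp]
    simp only [LinearMap.add_apply, Module.End.one_apply]
    rw [hAapp, hper]
    exact hself x
  have hne : (g ^ (2 ^ (n-2))) x ≠ 0 := by
    rw [hgp]
    simp only [LinearMap.add_apply, Module.End.one_apply]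
    intro hcon
    have hx : (A ^ (2 ^ (n-2))) x = x := by
      have := congrArg (· + x) hcon
      simpa [add_assoc, hself x] using this
    rw [hAapp] at hx
    have hp : IsPeriodicPt (⇑α) (2 ^ (n-2)) x := hx
    have h1 := hp.minimalPeriod_le (by positivity)
    rw [hm] at h1
    have h2 : (2:ℕ) ^ (n-1) < 2 ^ (n-1) := lt_of_le_of_lt h1
      (Nat.pow_lt_pow_right (by norm_num) (by omega))
    omega
  have hex : ∃ j, (g ^ j) x = 0 := ⟨2 ^ (n-1), h0⟩
  have hdspec : (g ^ (Nat.find hex)) x = 0 := Nat.find_spec hex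
  set d := Nat.find hex with hdd
  have hdmin : ∀ j < d, (g ^ j) x ≠ 0 := fun j hj => Nat.find_min hex hj
  have hmono : ∀ i j, i ≤ j → (g ^ i) x = 0 → (g ^ j) x = 0 := by
    intro i j hij hi
    obtain ⟨c, rfl⟩ := Nat.exists_eq_add_of_le hij
    clear hij
    induction c with
    | zero => simpa using hi
    | succ c ih =>
      have he : g ^ (i + (c+1)) = g * g ^ (i + c) := by
        rw [← pow_succ']; ring_nf
      rw [he, Module.End.mul_apply, ih, map_zero]
  have hdgt : 2 ^ (n-2) < d := by
    by_contra hcon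
    exact hne (hmono d (2 ^ (n-2)) (by omega) hdspec)
  have hdle : d ≤ n := by
    have claim : ∀ j, j ≤ d → j ≤ Module.finrank (ZMod 2) (LinearMap.ker (g ^ j)) := by
      intro j
      induction j with
      | zero => intro _; omega
      | succ j ih =>
        intro hjd
        have hle : LinearMap.ker (g ^ j) ≤ LinearMap.ker (g ^ (j+1)) := by
          intro v hv
          simp only [LinearMap.mem_ker] at *
          rw [pow_succ', Module.End.mul_apply, hv, map_zero]
        have hw1 : (g ^ ((j+1) + (d - 1 - j))) x = 0 := by
          have he : (j+1) + (d - 1 - j) = d := by omega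
          rw [he]; exact hdspec
        have hw2 : (g ^ (j + (d - 1 - j))) x ≠ 0 := by
          have he : j + (d - 1 - j) = d - 1 := by omega
          rw [he]; exact hdmin (d-1) (by omega)
        have hmem : (g ^ (d-1-j)) x ∈ LinearMap.ker (g ^ (j+1)) := by
          rw [LinearMap.mem_ker, ← Module.End.mul_apply, ← pow_add]
          exact hw1
        have hnmem : (g ^ (d-1-j)) x ∉ LinearMap.ker (g ^ j) := by
          rw [LinearMap.mem_ker, ← Module.End.mul_apply, ← pow_add]
          exact hw2
        have hlt : LinearMap.ker (g ^ j) < LinearMap.ker (g ^ (j+1)) :=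
          lt_of_le_of_ne hle (fun he => hnmem (he ▸ hmem))
        have h4 := Submodule.finrank_lt_finrank_of_lt hlt
        have h5 := ih (by omega)
        omega
    have h1 := claim d le_rfl
    have h2 : Module.finrank (ZMod 2) (LinearMap.ker (g ^ d)) ≤
        Module.finrank (ZMod 2) (Fin n → ZMod 2) :=
      Submodule.finrank_le _
    have h3 : Module.finrank (ZMod 2) (Fin n → ZMod 2) = n := Module.finrank_fin_fun _
    omega
  have := aux_pow12 n hn
  omega

/-- An automorphism of an elementary abelian `2`-group of order at least `2^4`
with `λ`-value at least `1/2` has `λ`-value strictly greater than `1/2`. -/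
theorem stmt12 (n : ℕ) (hn : 4 ≤ n) (α : AddAut (Fin n → ZMod 2))
    (h : (maxCycleLen (α : (Fin n → ZMod 2) → (Fin n → ZMod 2)) : ℚ) /
        Nat.card (Fin n → ZMod 2) ≥ 1 / 2) :
    (maxCycleLen (α : (Fin n → ZMod 2) → (Fin n → ZMod 2)) : ℚ) /
        Nat.card (Fin n → ZMod 2) > 1 / 2 := by
  have hcard : Nat.card (Fin n → ZMod 2) = 2 ^ n := by
    simp [Nat.card_eq_fintype_card]
  set M := maxCycleLen (α : (Fin n → ZMod 2) → (Fin n → ZMod 2)) with hM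
  set p : Equiv.Perm (Fin n → ZMod 2) := α.toEquiv with hp
  have hcoe : ⇑α = ⇑p := rfl
  have hbdd : ∀ x : Fin n → ZMod 2, Function.minimalPeriod (⇑α) x ≤ orderOf p := by
    intro x
    have hper : IsPeriodicPt (⇑α) (orderOf p) x := by
      show (⇑α)^[orderOf p] x = x
      rw [hcoe, Equiv.Perm.iterate_eq_pow, pow_orderOf_eq_one]
      rfl
    exact hper.minimalPeriod_le (orderOf_pos p)
  have hmem : M ∈ Set.range fun x => Function.minimalPeriod (⇑α) x := by
    apply Nat.sSup_mem
    · exact ⟨_, Set.mem_range_self 0⟩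
    · exact ⟨orderOf p, fun m ⟨x, hx⟩ => hx ▸ hbdd x⟩
  obtain ⟨x, hx⟩ := hmem
  rw [hcard] at h ⊢
  push_cast at h ⊢
  have hpos : (0:ℚ) < (2:ℚ) ^ n := by positivity
  rw [ge_iff_le, div_le_div_iff₀ (by norm_num) hpos] at h
  have hge : 2 ^ n ≤ M * 2 := by exact_mod_cast (by linarith : ((2:ℚ) ^ n) ≤ (M:ℚ) * 2)
  have hMne : M ≠ 2 ^ (n - 1) := hx ▸ key12 n hn α x
  have hgt : 2 ^ n < M * 2 := by
    have h2 : 2 ^ n = 2 ^ (n-1) * 2 := by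
      rw [← pow_succ]; congr 1; omega
    omega
  rw [gt_iff_lt, div_lt_div_iff₀ (by norm_num) hpos]
  have : ((2:ℚ) ^ n) < (M:ℚ) * 2 := by exact_mod_cast hgt
  linarith
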